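/- Potential-based reward shaping preserves Nash equilibria: in a finite-horizon Markov game, if each agent i's reward is modified from R_i(s_t, u_t) to R_i(s_t, u_t) + γΘ(s_{t+1}) - Θ(s_t) for a state-only potential Θ, then for every joint policy the modified discounted value of each agent differs from the original by a constant (depending only on the initial state), hence the set of Nash equilibria is unchanged. -/

import Mathlib

/-- Deterministic state trajectory induced by per-agent Markov policies
`π i : S → U i` with transition function `f`. -/
def traj {S : Type*} {ι : Type*} {U : ι → Type*}
    (f : S → (∀ i, U i) → S) (π : ∀ i, S → U i) (s0 : S) : ℕ → S
  | 0 => s0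
  | t + 1 => f (traj f π s0 t) (fun i => π i (traj f π s0 t))

/-- Infinite-horizon discounted value of agent `i` under joint policy `π`,
for reward function `R i`. -/
noncomputable def value {S : Type*} {ι : Type*} {U : ι → Type*}
    (γ : ℝ) (f : S → (∀ i, U i) → S) (R : ι → S → (∀ i, U i) → ℝ)
    (i : ι) (π : ∀ i, S → U i) (s0 : S) : ℝ :=
  ∑' t : ℕ, γ ^ t * R i (traj f π s0 t) (fun j => π j (traj f π s0 t))

theorem stmt_9 {S : Type*} {ι : Type*} [Fintype ι] [DecidableEq ι] {U : ι → Type*}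
    (γ : ℝ) (hγ0 : 0 < γ) (hγ1 : γ < 1)
    (f : S → (∀ i, U i) → S) (R : ι → S → (∀ i, U i) → ℝ)
    (MR MΘ : ℝ) (hR : ∀ i s u, |R i s u| ≤ MR)
    (Θ : S → ℝ) (hΘ : ∀ s, |Θ s| ≤ MΘ) :
    -- the shaped rewards `R i s u + γ * Θ (f s u) - Θ s` change every value
    -- function by the constant `Θ s0` depending only on the initial state ...
    (∀ (i : ι) (π : ∀ i, S → U i) (s0 : S),
      value γ f (fun i s u => R i s u + γ * Θ (f s u) - Θ s) i π s0 =
        value γ f R i π s0 - Θ s0) ∧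
    -- ... hence the Nash equilibria are unchanged
    (∀ (π : ∀ i, S → U i) (s0 : S),
      ((∀ (i : ι) (σ : S → U i),
          value γ f R i (Function.update π i σ) s0 ≤ value γ f R i π s0) ↔
       (∀ (i : ι) (σ : S → U i),
          value γ f (fun i s u => R i s u + γ * Θ (f s u) - Θ s) i
              (Function.update π i σ) s0 ≤
            value γ f (fun i s u => R i s u + γ * Θ (f s u) - Θ s) i π s0))) := by

  have key : ∀ (i : ι) (π : ∀ i, S → U i) (s0 : S),
      value γ f (fun i s u => R i s u + γ * Θ (f s u) - Θ s) i π s0 =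
        value γ f R i π s0 - Θ s0 := by
    intro i π s0
    set g : ℕ → ℝ := fun t => γ ^ t * Θ (traj f π s0 t) with hgdef
    set a : ℕ → ℝ := fun t =>
      γ ^ t * R i (traj f π s0 t) (fun j => π j (traj f π s0 t)) with hadef
    have hgeo : Summable (fun t : ℕ => γ ^ t) := summable_geometric_of_lt_one hγ0.le hγ1
    have hbound : ∀ (M : ℝ) (h : ℕ → ℝ), (∀ t, |h t| ≤ M) →
        Summable (fun t => γ ^ t * h t) := by
      intro M h hM
      apply Summable.of_abs
      apply Summable.of_nonneg_of_le (fun t => abs_nonneg _) (fun t => ?_)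
        (hgeo.mul_right M)
      rw [abs_mul, abs_pow, abs_of_pos hγ0]
      exact mul_le_mul_of_nonneg_left (hM t) (pow_nonneg hγ0.le t)
    have hg : Summable g := hbound MΘ _ (fun t => hΘ _)
    have ha : Summable a := hbound MR _ (fun t => hR i _ _)
    have hg1 : Summable (fun t => g (t + 1)) := (summable_nat_add_iff 1).2 hg
    have hstep : ∀ t : ℕ,
        γ ^ t * ((fun i s u => R i s u + γ * Θ (f s u) - Θ s) i (traj f π s0 t)
          (fun j => π j (traj f π s0 t))) = a t + (g (t + 1) - g t) := by
      intro t
      simp only [hadef, hgdef]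
      have : traj f π s0 (t + 1) = f (traj f π s0 t) (fun j => π j (traj f π s0 t)) := rfl
      rw [this]
      ring
    have hsum2 : Summable (fun t => g (t + 1) - g t) := hg1.sub hg
    calc value γ f (fun i s u => R i s u + γ * Θ (f s u) - Θ s) i π s0
        = ∑' t : ℕ, (a t + (g (t + 1) - g t)) := by
          unfold value; exact tsum_congr hstep
      _ = (∑' t, a t) + ∑' t, (g (t + 1) - g t) := Summable.tsum_add ha hsum2
      _ = (∑' t, a t) + ((∑' t, g (t + 1)) - ∑' t, g t) := by rw [Summable.tsum_sub hg1 hg]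
      _ = (∑' t, a t) - g 0 := by
          have := Summable.tsum_eq_zero_add hg
          rw [this]; ring
      _ = value γ f R i π s0 - Θ s0 := by
          simp [hgdef, hadef, value, traj]
  refine ⟨key, fun π s0 => ?_⟩
  constructor
  · intro h i σ
    rw [key i _ s0, key i π s0]
    linarith [h i σ]
  · intro h i σ
    have := h i σ
    rw [key i _ s0, key i π s0] at this
    linarith
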